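/- Let μ > 0, P > 0, and let g : ℝ → E be a continuous P-periodic function into a Banach space E. Then the function U(τ) = (μ/(e^{μP} − 1)) ∫_τ^{τ+P} e^{μ(θ−τ)} g(θ) dθ is P-periodic, continuously differentiable, and satisfies U(τ) + (1/μ)U'(τ) = g(τ) for all τ. -/

import Mathlib

/-- Explicit inversion formula for `Q_μ = I + (1/μ)∂_τ` on periodic functions:
`U(τ) = (μ/(e^{μP}−1)) ∫_τ^{τ+P} e^{μ(θ−τ)} g(θ) dθ` is periodic, C¹, and solves
`U + (1/μ)U' = g`. -/
theorem Qmu_inversion_formula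
    {E : Type*} [NormedAddCommGroup E] [NormedSpace ℝ E] [CompleteSpace E]
    (μ P : ℝ) (hμ : 0 < μ) (hP : 0 < P)
    (g : ℝ → E) (hg : Continuous g) (hper : Function.Periodic g P)
    (U : ℝ → E)
    (hU : ∀ τ, U τ = (μ / (Real.exp (μ * P) - 1)) •
        ∫ θ in τ..(τ + P), Real.exp (μ * (θ - τ)) • g θ) :
    Function.Periodic U P ∧ ContDiff ℝ 1 U ∧
    ∀ τ, U τ + (1 / μ) • deriv U τ = g τ := by
  have hexp1 : (1:ℝ) < Real.exp (μ * P) := by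
    rw [← Real.exp_zero]
    exact Real.exp_lt_exp.2 (by positivity)
  have hne : Real.exp (μ * P) - 1 ≠ 0 := by linarith
  set c : ℝ := μ / (Real.exp (μ * P) - 1) with hc
  have hcont : Continuous (fun θ : ℝ => Real.exp (μ * θ) • g θ) :=
    ((Real.continuous_exp.comp (continuous_const.mul continuous_id)).smul hg)
  set F : ℝ → E := fun y => ∫ θ in (0:ℝ)..y, Real.exp (μ * θ) • g θ with hF
  have hU' : ∀ τ, U τ = (c * Real.exp (-(μ * τ))) • (F (τ + P) - F τ) := by
    intro τ
    rw [hU τ]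
    have h1 : ∀ θ, Real.exp (μ * (θ - τ)) • g θ
        = Real.exp (-(μ * τ)) • (Real.exp (μ * θ) • g θ) := by
      intro θ
      rw [smul_smul, ← Real.exp_add]
      ring_nf
    simp_rw [h1]
    rw [intervalIntegral.integral_smul, smul_smul, hF,
      intervalIntegral.integral_interval_sub_left
        (hcont.intervalIntegrable _ _) (hcont.intervalIntegrable _ _)]
  have hFd : ∀ x : ℝ, HasDerivAt F (Real.exp (μ * x) • g x) x := by
    intro x
    exact intervalIntegral.integral_hasDerivAt_right (hcont.intervalIntegrable _ _)
      (hcont.stronglyMeasurableAtFilter _ _) hcont.continuousAt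
  have key : ∀ τ, HasDerivAt U (μ • g τ - μ • U τ) τ := by
    intro τ
    have hshift : HasDerivAt (fun y => F (y + P)) (Real.exp (μ * (τ + P)) • g (τ + P)) τ := by
      have := (hFd (τ + P)).scomp τ ((hasDerivAt_id τ).add_const P)
      simpa [Function.comp_def] using this
    have hW : HasDerivAt (fun y => F (y + P) - F y)
        (Real.exp (μ * (τ + P)) • g (τ + P) - Real.exp (μ * τ) • g τ) τ :=
      hshift.sub (hFd τ)
    have hh : HasDerivAt (fun y : ℝ => c * Real.exp (-(μ * y)))
        (c * (Real.exp (-(μ * τ)) * (-μ))) τ := by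
      have h1 : HasDerivAt (fun y : ℝ => -(μ * y)) (-μ) τ := by
        simpa using ((hasDerivAt_id τ).const_mul μ).fun_neg
      have h2 := (Real.hasDerivAt_exp (-(μ * τ))).comp τ h1
      have := h2.const_mul c
      simpa [mul_comm, mul_assoc, mul_left_comm] using this
    have hprod := hh.fun_smul hW
    have hUeq : U = fun y => (c * Real.exp (-(μ * y))) • (F (y + P) - F y) :=
      funext hU'
    rw [← hUeq] at hprod
    convert hprod using 1
    have hgp : g (τ + P) = g τ := hper τ
    rw [hU' τ, hgp]
    have h1 : Real.exp (-(μ * τ)) * Real.exp (μ * (τ + P)) = Real.exp (μ * P) := by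
      rw [← Real.exp_add]; ring_nf
    have h2 : Real.exp (-(μ * τ)) * Real.exp (μ * τ) = 1 := by
      rw [← Real.exp_add, neg_add_cancel, Real.exp_zero]
    have hcmul : c * (Real.exp (μ * P) - 1) = μ := by rw [hc, div_mul_cancel₀ _ hne]
    match_scalars
    · linear_combination -c * h1 + c * h2 - hcmul
    · ring
    · ring
  have hderiv : ∀ τ, deriv U τ = μ • g τ - μ • U τ := fun τ => (key τ).deriv
  have hdiff : Differentiable ℝ U := fun τ => (key τ).differentiableAt
  refine ⟨?_, ?_, ?_⟩
  · intro τ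
    rw [hU (τ + P), hU τ]
    congr 1
    have := intervalIntegral.integral_comp_add_right (a := τ) (b := τ + P) (d := P)
      (fun θ => Real.exp (μ * (θ - (τ + P))) • g θ)
    rw [show τ + P + P = τ + P + P from rfl] at this
    rw [← this]
    apply intervalIntegral.integral_congr
    intro θ _
    simp only
    rw [hper θ]
    congr 2
    ring
  · rw [contDiff_one_iff_deriv]
    refine ⟨hdiff, ?_⟩
    have : deriv U = fun τ => μ • g τ - μ • U τ := funext hderiv
    rw [this]
    exact (hg.const_smul μ).sub (hdiff.continuous.const_smul μ)
  · intro τ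
    rw [hderiv τ, smul_sub, smul_smul, smul_smul, one_div,
      inv_mul_cancel₀ hμ.ne', one_smul, one_smul]
    abel
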